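/- Let q be odd and let C be an [n,k]_q code with dim Hull(C) ≥ 2 (hull with respect to the standard inner product). Then for every invertible matrix of the form M = aI + bJ, the code C is not M-LCD; that is, Hull_M(C) ≠ {0}. -/

import Mathlib

open Matrix

/-- The `M`-dual of a code `C ⊆ F^n`: all `y` with `x M yᵀ = 0` for every `x ∈ C`. -/
def Mdual {F : Type*} [Field F] {n : ℕ} (M : Matrix (Fin n) (Fin n) F)
    (C : Submodule F (Fin n → F)) : Submodule F (Fin n → F) where
  carrier := {y | ∀ x ∈ C, x ⬝ᵥ (M *ᵥ y) = 0}
  add_mem' := by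
    intro y z hy hz x hx
    simp [Matrix.mulVec_add, dotProduct_add, hy x hx, hz x hx]
  zero_mem' := by
    intro x hx
    simp
  smul_mem' := by
    intro c y hy x hx
    simp [Matrix.mulVec_smul, dotProduct_smul, hy x hx]

theorem hull_dim_ge_two_not_M_LCD {F : Type*} [Field F] [Fintype F] {n : ℕ}
    (hq : Odd (Fintype.card F))
    (C : Submodule F (Fin n → F))
    (hhull : 2 ≤ Module.finrank F ↥(C ⊓ Mdual 1 C))
    (a b : F) (M : Matrix (Fin n) (Fin n) F)
    (hM : M = a • (1 : Matrix (Fin n) (Fin n) F) + b • (Matrix.of fun _ _ => (1 : F)))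
    (hMinv : IsUnit M.det) :
    C ⊓ Mdual M C ≠ ⊥ := by
  set H := C ⊓ Mdual 1 C with hH
  -- the linear functional y ↦ ∑ i, y i on H
  let f : H →ₗ[F] F :=
    { toFun := fun y => ∑ i, (y : Fin n → F) i
      map_add' := by intro y z; simp [Finset.sum_add_distrib]
      map_smul' := by intro c y; simp [Finset.mul_sum] }
  have hker : LinearMap.ker f ≠ ⊥ := by
    intro h
    have h1 : Module.finrank F H ≤ 1 := by
      have := LinearMap.finrank_range_add_finrank_ker f
      have hr : Module.finrank F (LinearMap.range f) ≤ Module.finrank F F :=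
        Submodule.finrank_le _
      rw [Module.finrank_self] at hr
      rw [h, finrank_bot] at this
      simp at this
      omega
    omega
  obtain ⟨y, hyker, hy0⟩ := Submodule.exists_mem_ne_zero_of_ne_bot hker
  have hyH : (y : Fin n → F) ∈ H := y.2
  have hyC : (y : Fin n → F) ∈ C := hyH.1
  have hyD : (y : Fin n → F) ∈ Mdual 1 C := hyH.2
  have hsum : ∑ i, (y : Fin n → F) i = 0 := hyker
  intro hbot
  apply hy0
  have hmem : (y : Fin n → F) ∈ C ⊓ Mdual M C := by
    refine ⟨hyC, ?_⟩
    intro x hx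
    have hdot : x ⬝ᵥ (y : Fin n → F) = 0 := by
      have := hyD x hx
      simpa using this
    rw [hM]
    rw [Matrix.add_mulVec, dotProduct_add, Matrix.smul_mulVec,
      Matrix.smul_mulVec, dotProduct_smul, dotProduct_smul,
      Matrix.one_mulVec, hdot]
    have hJ : ((Matrix.of fun _ _ => (1 : F)) : Matrix (Fin n) (Fin n) F) *ᵥ (y : Fin n → F)
        = fun _ => ∑ i, (y : Fin n → F) i := by
      funext j
      simp [Matrix.mulVec, dotProduct]
    rw [hJ, hsum]
    simp [dotProduct]
  rw [hbot] at hmem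
  exact Subtype.ext (by simpa using hmem)
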